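/- Let m, n, k be positive integers with k ≤ n and let X ∈ M_m ⊗ M_n. Then sup{ |f(X)| : f : M_m ⊗ M_n → ℂ a linear functional with f(I_{mn}) = 1 and f(P) ≥ 0 for every k-block positive P ∈ M_m ⊗ M_n } = sup{ |⟨v, X v⟩| : v a unit vector in ℂ^m ⊗ ℂ^n with SR(v) ≤ k }. (This is Theorem 5.2, characterizing the minimal order norm on M_m(OMIN^k(M_n)).) -/

import Mathlib

open scoped ComplexOrder Kronecker
open Matrix

noncomputable section

/-- The standard inner product `⟨v, w⟩ = ∑ conj(vᵢ) wᵢ` on `I → ℂ`. -/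
def inprod {I : Type*} [Fintype I] (v w : I → ℂ) : ℂ :=
  ∑ i, (starRingEnd ℂ) (v i) * w i

/-- `v` is a unit vector. -/
def UnitVec {I : Type*} [Fintype I] (v : I → ℂ) : Prop :=
  inprod v v = 1

/-- The Schmidt rank of a vector in `ℂ^I ⊗ ℂ^J`, i.e. the rank of the associated
`I × J` coefficient matrix. -/
noncomputable def SchmidtRank {I J : Type*} [Fintype I] [Fintype J] (v : I × J → ℂ) : ℕ :=
  (Matrix.of fun i j => v (i, j)).rank

/-- The operator norm (largest singular value) of a matrix, as
`sup { |⟨v, A w⟩| : v, w unit vectors }`. -/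
noncomputable def opNorm {I J : Type*} [Fintype I] [Fintype J] (A : Matrix I J ℂ) : ℝ :=
  sSup { t : ℝ | ∃ v w, UnitVec v ∧ UnitVec w ∧ t = ‖inprod v (A.mulVec w)‖ }

/-- The `S(k)`-norm of `X ∈ M_I ⊗ M_J`. -/
noncomputable def SNorm {I J : Type*} [Fintype I] [Fintype J] (k : ℕ)
    (X : Matrix (I × J) (I × J) ℂ) : ℝ :=
  sSup { t : ℝ | ∃ v w : I × J → ℂ, UnitVec v ∧ UnitVec w ∧
    SchmidtRank v ≤ k ∧ SchmidtRank w ≤ k ∧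
    t = ‖inprod v (X.mulVec w)‖ }

/-- `X` is a `k`-block positive (Hermitian) operator: `⟨v, X v⟩ ≥ 0` for every
vector of Schmidt rank at most `k`. -/
def kBlockPos {I J : Type*} [Fintype I] [Fintype J] (k : ℕ)
    (X : Matrix (I × J) (I × J) ℂ) : Prop :=
  X.IsHermitian ∧ ∀ v : I × J → ℂ, SchmidtRank v ≤ k → 0 ≤ inprod v (X.mulVec v)

/-- `ρ` has Schmidt number at most `k` (in particular it is positive semidefinite):
it is a finite nonnegative combination of rank-one projections onto vectors of
Schmidt rank at most `k`. -/
def SchmidtNumberLE {I J : Type*} [Fintype I] [Fintype J] (k : ℕ)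
    (ρ : Matrix (I × J) (I × J) ℂ) : Prop :=
  ∃ (N : ℕ) (c : Fin N → ℝ) (v : Fin N → (I × J → ℂ)),
    (∀ i, 0 ≤ c i) ∧ (∀ i, SchmidtRank (v i) ≤ k) ∧
    ρ = ∑ i, (c i : ℂ) • Matrix.vecMulVec (v i) (star (v i))

/-- `id_I ⊗ Φ` : the map applying `Φ` to the second tensor factor. -/
noncomputable def tensorId {I : Type*} [Fintype I] {a b : ℕ}
    (Φ : Matrix (Fin a) (Fin a) ℂ →ₗ[ℂ] Matrix (Fin b) (Fin b) ℂ)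
    (X : Matrix (I × Fin a) (I × Fin a) ℂ) : Matrix (I × Fin b) (I × Fin b) ℂ :=
  Matrix.of fun p q => Φ (Matrix.of fun s t => X (p.1, s) (q.1, t)) p.2 q.2

/-- The trace norm `‖X‖_tr = Tr √(X^* X)`. -/
noncomputable def trNorm {I : Type*} [Fintype I] [DecidableEq I] (X : Matrix I I ℂ) : ℝ :=
  (((Matrix.posSemidef_conjTranspose_mul_self X).1.eigenvectorUnitary : Matrix I I ℂ) *
    Matrix.diagonal (fun i => ((√((Matrix.posSemidef_conjTranspose_mul_self X).1.eigenvalues i) : ℝ) : ℂ)) *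
    (star (Matrix.posSemidef_conjTranspose_mul_self X).1.eigenvectorUnitary : Matrix I I ℂ)).trace.re

end
section MyAux
section aux
variable {I : Type*} [Fintype I]

lemma inprod_add_right (v w₁ w₂ : I → ℂ) : inprod v (w₁ + w₂) = inprod v w₁ + inprod v w₂ := by
  simp [inprod, mul_add, Finset.sum_add_distrib]

lemma inprod_sub_right (v w₁ w₂ : I → ℂ) : inprod v (w₁ - w₂) = inprod v w₁ - inprod v w₂ := by
  simp [inprod, mul_sub, Finset.sum_sub_distrib]

lemma inprod_smul_right (c : ℂ) (v w : I → ℂ) : inprod v (c • w) = c * inprod v w := by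
  simp [inprod, Finset.mul_sum]; exact Finset.sum_congr rfl fun i _ => by ring

lemma inprod_smul_left (c : ℂ) (v w : I → ℂ) :
    inprod (c • v) w = (starRingEnd ℂ) c * inprod v w := by
  simp [inprod, Finset.mul_sum]; exact Finset.sum_congr rfl fun i _ => by ring

lemma inprod_self_eq (v : I → ℂ) :
    inprod v v = ((∑ i, Complex.normSq (v i) : ℝ) : ℂ) := by
  push_cast
  exact Finset.sum_congr rfl fun i _ => by
    rw [Complex.normSq_eq_conj_mul_self]

lemma quad_conjTranspose [DecidableEq I] (A : Matrix I I ℂ) (v : I → ℂ) :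
    inprod v (Aᴴ.mulVec v) = (starRingEnd ℂ) (inprod v (A.mulVec v)) := by
  simp only [inprod, Matrix.mulVec, dotProduct, Matrix.conjTranspose_apply,
    Finset.mul_sum, map_sum, _root_.map_mul, Complex.conj_conj]
  rw [Finset.sum_comm]
  refine Finset.sum_congr rfl fun i _ => Finset.sum_congr rfl fun j _ => ?_
  simp only [Complex.star_def]
  ring

end aux

section rank
variable {I J : Type*} [Fintype I] [Fintype J] [DecidableEq I] [DecidableEq J]

lemma schmidtRank_smul (c : ℂ) (hc : c ≠ 0) (v : I × J → ℂ) :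
    SchmidtRank (c • v) = SchmidtRank v := by
  unfold SchmidtRank
  have h : (Matrix.of fun i j => (c • v) (i, j)) =
      (c • (1 : Matrix I I ℂ)) * (Matrix.of fun i j => v (i, j)) := by
    ext i j
    simp [Matrix.mul_apply, Matrix.one_apply, mul_ite, ite_mul, Finset.sum_ite_eq]
  rw [h, Matrix.rank_mul_eq_right_of_isUnit_det]
  rw [Matrix.det_smul, Matrix.det_one, mul_one]
  exact (isUnit_iff_ne_zero).mpr (pow_ne_zero _ hc)

lemma schmidtRank_single (i0 : I) (j0 : J) :
    SchmidtRank (fun p : I × J => if p = (i0, j0) then (1 : ℂ) else 0) ≤ 1 := by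
  unfold SchmidtRank
  have h : (Matrix.of fun i j => if (i, j) = (i0, j0) then (1 : ℂ) else 0) =
      Matrix.vecMulVec (fun i => if i = i0 then (1 : ℂ) else 0)
        (fun j => if j = j0 then (1 : ℂ) else 0) := by
    ext i j
    by_cases h1 : i = i0 <;> by_cases h2 : j = j0 <;>
      simp [Matrix.vecMulVec_apply, h1, h2, Prod.ext_iff]
  rw [h, Matrix.vecMulVec_eq (Fin 1)]
  exact le_trans (Matrix.rank_mul_le_left _ _)
    (le_trans (Matrix.rank_le_card_width _) (by simp))

end rank

section quad
variable {I J : Type*} [Fintype I] [Fintype J] [DecidableEq I] [DecidableEq J]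

lemma quad_bound {k : ℕ} {X : Matrix (I × J) (I × J) ℂ} {S : ℝ}
    (hS : ∀ v : I × J → ℂ, UnitVec v → SchmidtRank v ≤ k →
      ‖inprod v (X.mulVec v)‖ ≤ S) :
    ∀ v : I × J → ℂ, SchmidtRank v ≤ k →
      ‖inprod v (X.mulVec v)‖ ≤ S * (inprod v v).re := by
  intro v hv
  by_cases h0 : v = 0
  · simp [h0, inprod]
  · set t : ℝ := ∑ i, Complex.normSq (v i) with ht
    have htpos : 0 < t := by
      obtain ⟨i, hi⟩ := Function.ne_iff.mp h0
      exact Finset.sum_pos' (fun i _ => Complex.normSq_nonneg _)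
        ⟨i, Finset.mem_univ i, Complex.normSq_pos.mpr hi⟩
    set r : ℝ := Real.sqrt t with hr
    have hrpos : 0 < r := Real.sqrt_pos.mpr htpos
    have hrr : r * r = t := Real.mul_self_sqrt htpos.le
    set w : I × J → ℂ := ((r⁻¹ : ℝ) : ℂ) • v with hw
    have hcc : ((r⁻¹ : ℝ) : ℂ) * (starRingEnd ℂ) ((r⁻¹ : ℝ) : ℂ) = ((t⁻¹ : ℝ) : ℂ) := by
      rw [Complex.conj_ofReal, ← Complex.ofReal_mul, ← mul_inv, hrr]
    have hwq : inprod w (X.mulVec w) = ((t⁻¹ : ℝ) : ℂ) * inprod v (X.mulVec v) := by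
      rw [hw, Matrix.mulVec_smul, inprod_smul_right, inprod_smul_left, ← mul_assoc, hcc]
    have hwu : UnitVec w := by
      rw [UnitVec, hw, inprod_smul_right, inprod_smul_left, ← mul_assoc, hcc,
        inprod_self_eq v, ← ht, ← Complex.ofReal_mul, inv_mul_cancel₀ htpos.ne']
      norm_num
    have hwr : SchmidtRank w ≤ k := by
      rw [hw, schmidtRank_smul _ (by simp [hrpos.ne'])]
      exact hv
    have := hS w hwu hwr
    rw [hwq, norm_mul, Complex.norm_real, Real.norm_eq_abs, abs_of_nonneg (inv_nonneg.mpr htpos.le)] at this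
    have hre : (inprod v v).re = t := by rw [inprod_self_eq]; simp [ht]
    rw [hre]
    calc ‖inprod v (X.mulVec v)‖
        = t * (t⁻¹ * ‖inprod v (X.mulVec v)‖) := by
          field_simp
      _ ≤ t * S := by
          exact mul_le_mul_of_nonneg_left this htpos.le
      _ = S * t := mul_comm _ _

end quad

section state
variable {I J : Type*} [Fintype I] [Fintype J] [DecidableEq I] [DecidableEq J]

lemma state_le {k : ℕ} (X : Matrix (I × J) (I × J) ℂ)
    (f : Matrix (I × J) (I × J) ℂ →ₗ[ℂ] ℂ) (hf1 : f 1 = 1)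
    (hfpos : ∀ P, kBlockPos k P → 0 ≤ f P) {S : ℝ} (hS0 : 0 ≤ S)
    (hq : ∀ v : I × J → ℂ, SchmidtRank v ≤ k →
      ‖inprod v (X.mulVec v)‖ ≤ S * (inprod v v).re) :
    ‖f X‖ ≤ S := by
  set c : ℂ := f X with hcdef
  by_cases hc : c = 0
  · simp [hc, hS0]
  set a : ℝ := ‖c‖ with hadef
  have ha0 : a ≠ 0 := by simpa [hadef] using hc
  have ha0' : ((a : ℂ)) ≠ 0 := by exact_mod_cast ha0
  set u : ℂ := (starRingEnd ℂ) c / (a : ℂ) with hudef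
  have huc : u * c = (a : ℂ) := by
    have h1 : (starRingEnd ℂ) c * c = (a : ℂ) * (a : ℂ) := by
      rw [mul_comm, Complex.mul_conj]
      push_cast [hadef, Complex.normSq_eq_norm_sq]
      ring
    calc u * c = (starRingEnd ℂ) c * c / (a : ℂ) := by rw [hudef]; ring
      _ = (a : ℂ) := by rw [h1]; field_simp
  have hu1 : ‖u‖ = 1 := by
    rw [hudef, norm_div, Complex.norm_conj, Complex.norm_real, Real.norm_eq_abs,
      abs_of_nonneg (norm_nonneg c), ← hadef, div_self ha0]
  set cu : ℂ := (starRingEnd ℂ) u with hcudef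
  set Y : Matrix (I × J) (I × J) ℂ := (2⁻¹ * u) • X + (2⁻¹ * cu) • Xᴴ with hYdef
  set Z : Matrix (I × J) (I × J) ℂ :=
    (-(Complex.I * 2⁻¹) * u) • X + (Complex.I * 2⁻¹ * cu) • Xᴴ with hZdef
  have quadY : ∀ v : I × J → ℂ,
      inprod v (Y.mulVec v) = (((u * inprod v (X.mulVec v)).re : ℝ) : ℂ) := by
    intro v
    rw [hYdef, Matrix.add_mulVec, Matrix.smul_mulVec, Matrix.smul_mulVec,
      inprod_add_right, inprod_smul_right, inprod_smul_right, quad_conjTranspose]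
    set q := inprod v (X.mulVec v)
    have h2 : 2⁻¹ * cu * (starRingEnd ℂ) q = 2⁻¹ * (starRingEnd ℂ) (u * q) := by
      rw [_root_.map_mul]; ring
    rw [h2]
    have h3 : 2⁻¹ * u * q + 2⁻¹ * (starRingEnd ℂ) (u * q)
        = 2⁻¹ * (u * q + (starRingEnd ℂ) (u * q)) := by ring
    rw [h3, Complex.add_conj]
    push_cast
    ring
  have quadZ : ∀ v : I × J → ℂ,
      inprod v (Z.mulVec v) = (((u * inprod v (X.mulVec v)).im : ℝ) : ℂ) := by
    intro v
    rw [hZdef, Matrix.add_mulVec, Matrix.smul_mulVec, Matrix.smul_mulVec,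
      inprod_add_right, inprod_smul_right, inprod_smul_right, quad_conjTranspose]
    set q := inprod v (X.mulVec v)
    have hconj : (starRingEnd ℂ) (u * q) = cu * (starRingEnd ℂ) q := by
      rw [hcudef, _root_.map_mul]
    have h2 : -(Complex.I * 2⁻¹) * u * q + Complex.I * 2⁻¹ * cu * (starRingEnd ℂ) q
        = -(Complex.I * 2⁻¹) * (u * q - (starRingEnd ℂ) (u * q)) := by
      linear_combination (-(Complex.I * 2⁻¹)) * hconj
    rw [h2, Complex.sub_conj]
    push_cast
    linear_combination (-((u * q).im : ℂ)) * Complex.I_sq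
  have hermY : Yᴴ = Y := by
    simp only [hYdef, Matrix.conjTranspose_add, Matrix.conjTranspose_smul,
      Matrix.conjTranspose_conjTranspose, Complex.star_def]
    have e1 : (starRingEnd ℂ) (2⁻¹ * u) = 2⁻¹ * cu := by
      rw [_root_.map_mul, map_inv₀, map_ofNat, hcudef]
    have e2 : (starRingEnd ℂ) (2⁻¹ * cu) = 2⁻¹ * u := by
      rw [_root_.map_mul, map_inv₀, map_ofNat, hcudef, Complex.conj_conj]
    rw [e1, e2, add_comm]
  have hermZ : Zᴴ = Z := by
    simp only [hZdef, Matrix.conjTranspose_add, Matrix.conjTranspose_smul,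
      Matrix.conjTranspose_conjTranspose, Complex.star_def]
    have e1 : (starRingEnd ℂ) (-(Complex.I * 2⁻¹) * u) = Complex.I * 2⁻¹ * cu := by
      rw [_root_.map_mul, map_neg, _root_.map_mul, Complex.conj_I, map_inv₀, map_ofNat, hcudef]
      ring
    have e2 : (starRingEnd ℂ) (Complex.I * 2⁻¹ * cu) = -(Complex.I * 2⁻¹) * u := by
      rw [_root_.map_mul, _root_.map_mul, Complex.conj_I, map_inv₀, map_ofNat, hcudef,
        Complex.conj_conj]
      ring
    rw [e1, e2, add_comm]
  have decompose : u • X = Y + Complex.I • Z := by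
    rw [hYdef, hZdef, smul_add, smul_smul, smul_smul]
    have e1 : Complex.I * (-(Complex.I * 2⁻¹) * u) = 2⁻¹ * u := by
      linear_combination (-(2⁻¹ : ℂ) * u) * Complex.I_sq
    have e2 : Complex.I * (Complex.I * 2⁻¹ * cu) = -(2⁻¹ * cu) := by
      linear_combination ((2⁻¹ : ℂ) * cu) * Complex.I_sq
    rw [e1, e2]
    module
  -- the two block-positive elements
  have habs : ∀ v : I × J → ℂ, ‖u * inprod v (X.mulVec v)‖
      = ‖inprod v (X.mulVec v)‖ := by
    intro v; rw [norm_mul, hu1, one_mul]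
  have hposgen : ∀ (T : Matrix (I × J) (I × J) ℂ), T.IsHermitian →
      (∀ v : I × J → ℂ, inprod v (T.mulVec v)
        = (((u * inprod v (X.mulVec v)).re : ℝ) : ℂ) ∨
       inprod v (T.mulVec v) = (((u * inprod v (X.mulVec v)).im : ℝ) : ℂ)) →
      kBlockPos k ((S : ℂ) • (1 : Matrix (I × J) (I × J) ℂ) - T) := by
    intro T hT hTq
    constructor
    · show _ = _
      rw [Matrix.conjTranspose_sub, Matrix.conjTranspose_smul, Matrix.conjTranspose_one,
        Complex.star_def, Complex.conj_ofReal, hT]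
    · intro v hv
      rw [Matrix.sub_mulVec, inprod_sub_right, Matrix.smul_mulVec, Matrix.one_mulVec,
        inprod_smul_right, inprod_self_eq]
      have hret : (inprod v v).re = (∑ i, Complex.normSq (v i) : ℝ) := by
        rw [inprod_self_eq]; simp
      have hb : ‖inprod v (X.mulVec v)‖ ≤ S * (∑ i, Complex.normSq (v i) : ℝ) := by
        rw [← hret]; exact hq v hv
      rcases hTq v with h | h <;>
      · rw [h, ← Complex.ofReal_mul, ← Complex.ofReal_sub, Complex.zero_le_real, sub_nonneg]
        refine le_trans ?_ hb
        first
        | exact le_trans (Complex.re_le_norm _) (le_of_eq (habs v))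
        | exact le_trans (le_trans (le_abs_self _) (Complex.abs_im_le_norm _))
            (le_of_eq (habs v))
  have hPY := hfpos _ (hposgen Y hermY fun v => Or.inl (quadY v))
  have hPZ := hfpos _ (hposgen Z hermZ fun v => Or.inr (quadZ v))
  have hfY : f ((S : ℂ) • (1 : Matrix (I × J) (I × J) ℂ) - Y) = (S : ℂ) - f Y := by
    rw [map_sub, LinearMap.map_smul, hf1, smul_eq_mul, mul_one]
  have hfZ : f ((S : ℂ) • (1 : Matrix (I × J) (I × J) ℂ) - Z) = (S : ℂ) - f Z := by
    rw [map_sub, LinearMap.map_smul, hf1, smul_eq_mul, mul_one]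
  rw [hfY] at hPY; rw [hfZ] at hPZ
  rw [Complex.le_def] at hPY hPZ
  have hYre : (f Y).re ≤ S := by
    have := hPY.1; simp [Complex.sub_re, Complex.ofReal_re] at this; linarith
  have hZim : (f Z).im = 0 := by
    have := hPZ.2; simp [Complex.sub_im, Complex.ofReal_im] at this; linarith
  have hac : (a : ℂ) = f Y + Complex.I * f Z := by
    rw [← huc, ← smul_eq_mul, hcdef, ← LinearMap.map_smul, decompose, map_add, LinearMap.map_smul, smul_eq_mul]
  have := congrArg Complex.re hac
  simp [Complex.add_re, Complex.mul_re, Complex.I_re, Complex.I_im, hZim,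
    Complex.ofReal_re] at this
  rw [← hadef] at *
  rw [this]
  linarith

end state
end MyAux

/-- Theorem 5.2: the minimal order norm on `M_m(OMIN^k(M_n))`. -/
theorem kSuperMinimal_minimal_order_norm (m n k : ℕ) (hm : 0 < m) (hn : 0 < n)
    (hk : 0 < k) (hkn : k ≤ n)
    (X : Matrix (Fin m × Fin n) (Fin m × Fin n) ℂ) :
    sSup { t : ℝ | ∃ f : Matrix (Fin m × Fin n) (Fin m × Fin n) ℂ →ₗ[ℂ] ℂ,
        f 1 = 1 ∧ (∀ P, kBlockPos k P → 0 ≤ f P) ∧ t = ‖f X‖ } =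
      sSup { t : ℝ | ∃ v : Fin m × Fin n → ℂ, UnitVec v ∧ SchmidtRank v ≤ k ∧
        t = ‖inprod v (X.mulVec v)‖ } := by
  set R := { t : ℝ | ∃ v : Fin m × Fin n → ℂ, UnitVec v ∧ SchmidtRank v ≤ k ∧
        t = ‖inprod v (X.mulVec v)‖ } with hR
  set L := { t : ℝ | ∃ f : Matrix (Fin m × Fin n) (Fin m × Fin n) ℂ →ₗ[ℂ] ℂ,
        f 1 = 1 ∧ (∀ P, kBlockPos k P → 0 ≤ f P) ∧ t = ‖f X‖ } with hL
  -- R is bounded above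
  have hbddR : BddAbove R := by
    refine ⟨∑ p, ∑ q, ‖X p q‖, ?_⟩
    rintro t ⟨v, hu, _, rfl⟩
    have hsum : (∑ i, Complex.normSq (v i)) = 1 := by
      have := hu
      rw [UnitVec, inprod_self_eq] at this
      exact_mod_cast this
    have hv1 : ∀ p, ‖v p‖ ≤ 1 := by
      intro p
      have h1 : Complex.normSq (v p) ≤ 1 := by
        rw [← hsum]
        exact Finset.single_le_sum (fun i _ => Complex.normSq_nonneg _) (Finset.mem_univ p)
      rw [← Complex.sq_norm] at h1
      nlinarith [norm_nonneg (v p)]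
    have hexp : inprod v (X.mulVec v)
        = ∑ p, ∑ q, (starRingEnd ℂ) (v p) * (X p q * v q) := by
      simp [inprod, Matrix.mulVec, dotProduct, Finset.mul_sum]
    rw [hexp]
    refine le_trans (norm_sum_le _ _) ?_
    refine le_trans (Finset.sum_le_sum fun p _ => norm_sum_le _ _) ?_
    refine Finset.sum_le_sum fun p _ => Finset.sum_le_sum fun q _ => ?_
    rw [norm_mul, norm_mul, Complex.norm_conj]
    calc ‖v p‖ * (‖X p q‖ * ‖v q‖)
        ≤ 1 * (‖X p q‖ * 1) := by
          apply mul_le_mul (hv1 p) ?_ (by positivity) zero_le_one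
          exact mul_le_mul_of_nonneg_left (hv1 q) (norm_nonneg _)
      _ = ‖X p q‖ := by ring
  -- R is nonempty
  have hneR : R.Nonempty := by
    set v0 : Fin m × Fin n → ℂ :=
      fun p => if p = ((⟨0, hm⟩ : Fin m), (⟨0, hn⟩ : Fin n)) then 1 else 0 with hv0
    have hunit : UnitVec v0 := by
      simp [UnitVec, inprod, hv0, apply_ite, Finset.sum_ite_eq']
    have hsr : SchmidtRank v0 ≤ k := le_trans (schmidtRank_single _ _) hk
    exact ⟨_, v0, hunit, hsr, rfl⟩
  have hS_ub : ∀ v : Fin m × Fin n → ℂ, UnitVec v → SchmidtRank v ≤ k →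
      ‖inprod v (X.mulVec v)‖ ≤ sSup R := fun v h1 h2 =>
    le_csSup hbddR ⟨v, h1, h2, rfl⟩
  have hS0 : 0 ≤ sSup R := by
    obtain ⟨t0, v0, h1, h2, h3⟩ := hneR
    exact le_trans (h3 ▸ norm_nonneg _) (le_csSup hbddR ⟨v0, h1, h2, h3⟩)
  have hq := quad_bound hS_ub
  have key : ∀ t ∈ L, t ≤ sSup R := by
    rintro t ⟨f, hf1, hfpos, rfl⟩
    exact state_le X f hf1 hfpos hS0 hq
  have hsub : R ⊆ L := by
    rintro t ⟨v, hu, hr, rfl⟩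
    refine ⟨{ toFun := fun Y => inprod v (Y.mulVec v)
              map_add' := fun A B => by
                simp only [Matrix.add_mulVec, inprod_add_right]
              map_smul' := fun c A => by
                simp only [Matrix.smul_mulVec, inprod_smul_right, RingHom.id_apply,
                  smul_eq_mul] }, ?_, ?_, rfl⟩
    · show inprod v ((1 : Matrix _ _ ℂ).mulVec v) = 1
      rw [Matrix.one_mulVec]; exact hu
    · exact fun P hP => hP.2 v hr
  exact le_antisymm (Real.sSup_le key hS0) (csSup_le_csSup ⟨sSup R, key⟩ hneR hsub)
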